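/- Let K be a subfield of Q̄ and let α ∈ G. Then the orbit Orb_K(α) of α under the action of Aut(Q̄/K) on G contains exactly δ_K(α) distinct elements, i.e., |Orb_K(α)| = δ_K(α). -/

import Mathlib

noncomputable section

/-- A fixed algebraic closure of `ℚ`. -/
abbrev Qbar : Type := AlgebraicClosure ℚ

/-- The primitive integer minimal polynomial of an algebraic number. -/
noncomputable def intMinpoly (α : Qbar) : Polynomial ℤ :=
  (IsLocalization.integerNormalization (nonZeroDivisors ℤ) (minpoly ℚ α)).primPart

/-- The absolute logarithmic Weil height of an algebraic number, defined via the
(logarithmic) Mahler measure of its primitive integer minimal polynomial. -/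
noncomputable def weilHeight (α : Qbar) : ℝ :=
  ((minpoly ℚ α).natDegree : ℝ)⁻¹ *
    (Real.log |((intMinpoly α).leadingCoeff : ℝ)| +
      (((intMinpoly α).map (Int.castRingHom ℂ)).roots.map
        (fun z => Real.log (max 1 ‖z‖))).sum)

/-- `σ` is an automorphism of `Q̄` fixing `K` pointwise, i.e. `σ ∈ Aut(Q̄/K)`. -/
def fixes (K : Subfield Qbar) (σ : Qbar ≃+* Qbar) : Prop := ∀ x ∈ K, σ x = x

/-- The group `Q̄^×`. -/
abbrev Qx : Type := Qbarˣ

/-- `G = Q̄^× / Tor(Q̄^×)`. -/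
abbrev GG : Type := Qx ⧸ CommGroup.torsion Qx

/-- The Weil height descends to `G`: since `h` is constant on cosets of the torsion
subgroup, the infimum below equals the common value of `h` at any representative. -/
noncomputable def hG (x : GG) : ℝ :=
  sInf {r : ℝ | ∃ u : Qx, (QuotientGroup.mk u : GG) = x ∧ r = weilHeight (u : Qbar)}

/-- The image `G_K` of `K^×` in `G`. -/
def GK (K : Subfield Qbar) : Set GG :=
  {x | ∃ u : Qx, (u : Qbar) ∈ K ∧ (QuotientGroup.mk u : GG) = x}

/-- `span_ℚ G_K = { β ∈ G : β^m ∈ G_K for some nonzero integer m }`. -/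
def spanGK (K : Subfield Qbar) : Set GG :=
  {x | ∃ m : ℤ, m ≠ 0 ∧ x ^ m ∈ GK K}

/-- The action of an automorphism of `Q̄` on `G = Q̄^×/Tor(Q̄^×)`. -/
def autG (σ : Qbar ≃+* Qbar) : GG →* GG :=
  QuotientGroup.map _ _ (Units.map (σ : Qbar →* Qbar))
    (fun u hu => by
      rw [Subgroup.mem_comap]
      rw [CommGroup.mem_torsion] at hu ⊢
      exact MonoidHom.isOfFinOrder _ hu)

/-- The orbit of `x ∈ G` under the action of `Aut(Q̄/K)` on `G`. -/
def OrbG (K : Subfield Qbar) (x : GG) : Set GG :=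
  {y | ∃ σ : Qbar ≃+* Qbar, fixes K σ ∧ y = autG σ x}

/-- `E_K = { α ∈ G : ∏_{β ∈ Orb_K(α)} β = 1 }`. -/
def EK (K : Subfield Qbar) : Set GG :=
  {x | (∏ᶠ y ∈ OrbG K x, y) = 1}

/-- `δ_K(α) = min { [K(α^m) : K] : m a nonzero integer }`, where `[K(β) : K]` is the
degree of the minimal polynomial of `β` over `K`. -/
noncomputable def deltaK (K : Subfield Qbar) (α : Qbar) : ℕ :=
  letI : Algebra ↥K Qbar := K.subtype.toAlgebra
  sInf {d : ℕ | ∃ m : ℤ, m ≠ 0 ∧ d = (minpoly ↥K (α ^ m)).natDegree}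

/-- Counting lemma: if `f a = f b → g a = g b` on `s`, then `g '' s` has at most as many
elements as `f '' s`. -/
lemma my_ncard_image_le_image {A B C : Type*} [Nonempty C] {s : Set A} (hs : s.Finite)
    (f : A → B) (g : A → C)
    (h : ∀ a ∈ s, ∀ b ∈ s, f a = f b → g a = g b) :
    (g '' s).ncard ≤ (f '' s).ncard := by
  classical
  set F : B → C := fun b =>
    if hb : ∃ a ∈ s, f a = b then g hb.choose else Classical.arbitrary C with hF
  have himg : g '' s = F '' (f '' s) := by
    ext c
    constructor
    · rintro ⟨a, ha, rfl⟩
      refine ⟨f a, ⟨a, ha, rfl⟩, ?_⟩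
      have hb : ∃ a' ∈ s, f a' = f a := ⟨a, ha, rfl⟩
      simp only [hF, dif_pos hb]
      exact h _ hb.choose_spec.1 _ ha hb.choose_spec.2
    · rintro ⟨b, ⟨a, ha, rfl⟩, rfl⟩
      have hb : ∃ a' ∈ s, f a' = f a := ⟨a, ha, rfl⟩
      simp only [hF, dif_pos hb]
      exact ⟨hb.choose, hb.choose_spec.1, rfl⟩
  rw [himg]
  exact Set.ncard_image_le (hs.image f)

/-- The set of conjugates of `β` over `K` inside `Q̄`. -/
def ConjSet (K : Subfield Qbar) (β : Qbar) : Set Qbar :=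
  {x | ∃ σ : Qbar ≃+* Qbar, fixes K σ ∧ x = σ β}

set_option synthInstance.maxHeartbeats 1000000
set_option maxHeartbeats 2000000

lemma conjSet_eq_rootSet (K : Subfield Qbar) (β : Qbar) :
    letI : Algebra ↥K Qbar := K.subtype.toAlgebra
    ConjSet K β = (minpoly ↥K β).rootSet Qbar := by
  letI : Algebra ↥K Qbar := K.subtype.toAlgebra
  haveI : IsScalarTower ℚ ↥K Qbar := IsScalarTower.of_algebraMap_eq' (Subsingleton.elim _ _)
  haveI : Algebra.IsAlgebraic ↥K Qbar := @Algebra.IsAlgebraic.tower_top ℚ ↥K Qbar _ _ _ _ _ _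
    (IsScalarTower.of_algebraMap_eq' (Subsingleton.elim _ _)) (AlgebraicClosure.isAlgebraic ℚ)
  rw [← Algebra.IsAlgebraic.range_eval_eq_rootSet_minpoly (F := ↥K) (K := Qbar) Qbar β]
  ext x
  constructor
  · rintro ⟨σ, hσ, rfl⟩
    exact ⟨{ toRingHom := (σ : Qbar →+* Qbar), commutes' := fun k => hσ k.1 k.2 }, rfl⟩
  · rintro ⟨ψ, rfl⟩
    refine ⟨(AlgEquiv.ofBijective ψ (Algebra.IsAlgebraic.algHom_bijective ψ)).toRingEquiv,
      fun k hk => ψ.commutes ⟨k, hk⟩, rfl⟩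

lemma ncard_conjSet (K : Subfield Qbar) (β : Qbar) :
    letI : Algebra ↥K Qbar := K.subtype.toAlgebra
    (ConjSet K β).ncard = (minpoly ↥K β).natDegree := by
  letI : Algebra ↥K Qbar := K.subtype.toAlgebra
  haveI : IsScalarTower ℚ ↥K Qbar := IsScalarTower.of_algebraMap_eq' (Subsingleton.elim _ _)
  haveI : Algebra.IsAlgebraic ↥K Qbar := @Algebra.IsAlgebraic.tower_top ℚ ↥K Qbar _ _ _ _ _ _
    (IsScalarTower.of_algebraMap_eq' (Subsingleton.elim _ _)) (AlgebraicClosure.isAlgebraic ℚ)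
  have hint : IsIntegral ↥K β := (Algebra.IsAlgebraic.isAlgebraic β).isIntegral
  have hcard := Polynomial.card_rootSet_eq_natDegree (K := Qbar)
    ((minpoly.irreducible hint).separable)
    (IsAlgClosed.splits ((minpoly ↥K β).map (algebraMap ↥K Qbar)))
  rw [conjSet_eq_rootSet, ← hcard, Set.ncard_eq_toFinset_card']
  simp [Set.toFinset_card]

lemma conjSet_finite (K : Subfield Qbar) (β : Qbar) : (ConjSet K β).Finite := by
  rw [conjSet_eq_rootSet]
  exact Set.toFinite _

lemma conjSet_zpow (K : Subfield Qbar) (β : Qbar) (m : ℤ) :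
    ConjSet K (β ^ m) = (fun x : Qbar => x ^ m) '' ConjSet K β := by
  ext x
  constructor
  · rintro ⟨σ, hσ, rfl⟩
    exact ⟨σ β, ⟨σ, hσ, rfl⟩, (map_zpow₀ (σ : Qbar ≃+* Qbar) β m).symm⟩
  · rintro ⟨y, ⟨σ, hσ, rfl⟩, rfl⟩
    exact ⟨σ, hσ, (map_zpow₀ (σ : Qbar ≃+* Qbar) β m).symm⟩

/-- Lemma 3.2: the orbit of `α ∈ G` under `Aut(Q̄/K)` has exactly `δ_K(α)` elements.
(Here the class of `α` in `G` is represented by a unit `u` of `Q̄`; `δ_K` is constant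
on cosets of the torsion subgroup, so this represents the statement for all of `G`.) -/
theorem stmt8 (K : Subfield Qbar) (u : Qx) :
    (OrbG K (QuotientGroup.mk u : GG)).ncard = deltaK K (u : Qbar) := by
  classical
  letI : Algebra ↥K Qbar := K.subtype.toAlgebra
  set α : Qbar := (u : Qbar) with hα
  -- the orbit of the unit `u` in `Qx`
  set T : Set Qx := {v | ∃ σ : Qbar ≃+* Qbar, fixes K σ ∧ v = Units.map (σ : Qbar →* Qbar) u}
    with hT
  -- the image of `T` under `v ↦ (v^m : Qbar)` is the conjugate set of `α^m`
  have hTm : ∀ m : ℤ, (fun v : Qx => ((v : Qbar) ^ m)) '' T = ConjSet K (α ^ m) := by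
    intro m
    rw [conjSet_zpow]
    have hT1 : ConjSet K α = (fun v : Qx => (v : Qbar)) '' T := by
      ext x
      constructor
      · rintro ⟨σ, hσ, rfl⟩
        exact ⟨Units.map (σ : Qbar →* Qbar) u, ⟨σ, hσ, rfl⟩, rfl⟩
      · rintro ⟨v, ⟨σ, hσ, rfl⟩, rfl⟩
        exact ⟨σ, hσ, rfl⟩
    rw [hT1, ← Set.image_comp]
    rfl
  -- `T` is finite
  have hTfin : T.Finite := by
    have h1 : ((fun v : Qx => ((v : Qbar) ^ (1 : ℤ))) '' T).Finite := by
      rw [hTm 1]; exact conjSet_finite K (α ^ (1 : ℤ))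
    refine Set.Finite.of_finite_image h1 ?_
    intro v hv w hw hvw
    simp only [zpow_one] at hvw
    exact Units.ext hvw
  -- the orbit in `GG` is the image of `T` under the quotient map
  have hOrb : OrbG K (QuotientGroup.mk u : GG)
      = (fun v : Qx => (QuotientGroup.mk v : GG)) '' T := by
    ext y
    constructor
    · rintro ⟨σ, hσ, rfl⟩
      exact ⟨Units.map (σ : Qbar →* Qbar) u, ⟨σ, hσ, rfl⟩, rfl⟩
    · rintro ⟨v, ⟨σ, hσ, rfl⟩, rfl⟩
      exact ⟨σ, hσ, rfl⟩
  -- key fact: `mk v = mk w ↔ v⁻¹ * w` has finite order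
  have hmk : ∀ v w : Qx, (QuotientGroup.mk v : GG) = QuotientGroup.mk w
      ↔ IsOfFinOrder (v⁻¹ * w) := by
    intro v w
    rw [QuotientGroup.eq, CommGroup.mem_torsion]
  -- Step A : the orbit count is ≤ every degree in the defining set of δ_K
  have stepA : ∀ m : ℤ, m ≠ 0 →
      (OrbG K (QuotientGroup.mk u : GG)).ncard ≤ (minpoly ↥K (α ^ m)).natDegree := by
    intro m hm
    rw [← ncard_conjSet K (α ^ m), ← hTm m, hOrb]
    refine my_ncard_image_le_image hTfin _ _ ?_
    intro v hv w hw hvw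
    rw [hmk]
    rw [isOfFinOrder_iff_zpow_eq_one]
    refine ⟨m, hm, ?_⟩
    rw [mul_zpow, inv_zpow]
    have : (v : Qbar) ^ m = (w : Qbar) ^ m := hvw
    have hvw' : v ^ m = w ^ m := by
      ext
      rw [Units.val_zpow_eq_zpow_val, Units.val_zpow_eq_zpow_val]
      exact this
    rw [hvw', inv_mul_cancel]
  -- Step B : choose an exponent `M` realizing the orbit count
  obtain ⟨M, hM0, hMkey⟩ : ∃ M : ℕ, 0 < M ∧ ∀ v ∈ T, ∀ w ∈ T,
      (QuotientGroup.mk v : GG) = QuotientGroup.mk w → v ^ (M : ℤ) = w ^ (M : ℤ) := by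
    set P := hTfin.toFinset ×ˢ hTfin.toFinset with hP
    set M : ℕ := ∏ p ∈ P, (if IsOfFinOrder (p.1⁻¹ * p.2) then orderOf (p.1⁻¹ * p.2) else 1)
      with hMdef
    refine ⟨M, ?_, ?_⟩
    · apply Finset.prod_pos
      intro p hp
      split
      · exact (IsOfFinOrder.orderOf_pos (by assumption))
      · exact Nat.one_pos
    · intro v hv w hw hmkeq
      have hfin : IsOfFinOrder (v⁻¹ * w) := (hmk v w).mp hmkeq
      have hdvd : orderOf (v⁻¹ * w) ∣ M := by
        have hmem : (v, w) ∈ P := by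
          rw [hP, Finset.mem_product]
          exact ⟨hTfin.mem_toFinset.mpr hv, hTfin.mem_toFinset.mpr hw⟩
        have := Finset.dvd_prod_of_mem
          (fun p : Qx × Qx => if IsOfFinOrder (p.1⁻¹ * p.2) then orderOf (p.1⁻¹ * p.2) else 1)
          hmem
        simpa [hfin] using this
      have hpow : (v⁻¹ * w) ^ M = 1 := orderOf_dvd_iff_pow_eq_one.mp hdvd
      have : (v⁻¹ * w) ^ (M : ℤ) = 1 := by rw [zpow_natCast]; exact hpow
      rw [mul_zpow, inv_zpow] at this
      exact inv_mul_eq_one.mp this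
  have hMne : (M : ℤ) ≠ 0 := Int.natCast_ne_zero_iff_pos.mpr hM0
  have stepB : (minpoly ↥K (α ^ (M : ℤ))).natDegree
      ≤ (OrbG K (QuotientGroup.mk u : GG)).ncard := by
    rw [← ncard_conjSet K (α ^ (M : ℤ)), ← hTm (M : ℤ), hOrb]
    refine my_ncard_image_le_image hTfin _ _ ?_
    intro v hv w hw hvw
    have := hMkey v hv w hw hvw
    have : ((v ^ (M : ℤ) : Qx) : Qbar) = ((w ^ (M : ℤ) : Qx) : Qbar) := by rw [this]
    rwa [Units.val_zpow_eq_zpow_val, Units.val_zpow_eq_zpow_val] at this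
  -- conclude
  rw [deltaK]
  apply le_antisymm
  · exact le_csInf ⟨(minpoly ↥K (α ^ (1 : ℤ))).natDegree, 1, one_ne_zero, rfl⟩
      (by rintro d ⟨m, hm, rfl⟩; exact stepA m hm)
  · exact le_trans (Nat.sInf_le ⟨(M : ℤ), hMne, rfl⟩) stepB

end
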